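/- Suppose that for a database D and a real number λ ≥ 0, real estimates ŷ_T are given for all T ⊆ [d] with |T| ≤ k, satisfying |ŷ_T − parity_T(D)| ≤ λ for every such T. Define z_{S,β} = Σ_{T ⊆ S} α_{S,β,T} · ŷ_T for each S ⊆ [d] with |S| = k and β ∈ {−1,1}^S. Then |z_{S,β} − marg_{(S,β)}(D)| ≤ λ for every such S and β. -/

import Mathlib

open Finset

lemma multiset_sum_map_swap {α γ : Type*} (D : Multiset α) (P : Finset γ)
    (g : γ → α → ℝ) :
    (D.map fun e => ∑ T ∈ P, g T e).sum = ∑ T ∈ P, (D.map (g T)).sum := by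
  induction D using Multiset.induction with
  | empty => simp
  | cons a s ih => simp [ih, Finset.sum_add_distrib]

/-- If estimates `ŷ_T` satisfy `|ŷ_T − parity_T(D)| ≤ λ` for all `T ⊆ [d]`
with `|T| ≤ k`, then the estimates `z_{S,β} = Σ_{T ⊆ S} α_{S,β,T} ŷ_T` (where
`α_{S,β,T} = 2^{−k} ∏_{i∈T} β_i`) satisfy `|z_{S,β} − marg_{(S,β)}(D)| ≤ λ` for every
`S ⊆ [d]` with `|S| = k` and every `β ∈ {−1,1}^S`. -/
theorem stmt_1 (d k : ℕ) (hd : 1 ≤ d) (hk : 1 ≤ k)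
    (D : Multiset (Fin d → ℝ)) (hD : ∀ e ∈ D, ∀ i, e i = 1 ∨ e i = -1)
    (lam : ℝ) (hlam : 0 ≤ lam)
    (yhat : Finset (Fin d) → ℝ)
    (hyhat : ∀ T : Finset (Fin d), T.card ≤ k →
      |yhat T - (D.map fun e => ∏ i ∈ T, e i).sum| ≤ lam)
    (S : Finset (Fin d)) (hS : S.card = k)
    (β : Fin d → ℝ) (hβ : ∀ i ∈ S, β i = 1 ∨ β i = -1) :
    |(∑ T ∈ S.powerset, ((2 : ℝ) ^ (-(k : ℤ)) * ∏ i ∈ T, β i) * yhat T) -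
        (D.map fun e => ∏ i ∈ S, (if e i = β i then (1 : ℝ) else 0)).sum| ≤ lam := by
  set α : Finset (Fin d) → ℝ := fun T => (2 : ℝ) ^ (-(k : ℤ)) * ∏ i ∈ T, β i with hα
  -- rewrite the marginal as a sum of parities
  have key : (D.map fun e => ∏ i ∈ S, (if e i = β i then (1 : ℝ) else 0)).sum
      = ∑ T ∈ S.powerset, α T * (D.map fun e => ∏ i ∈ T, e i).sum := by
    have hpt : ∀ e ∈ D, (∏ i ∈ S, (if e i = β i then (1 : ℝ) else 0))
        = ∑ T ∈ S.powerset, α T * ∏ i ∈ T, e i := by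
      intro e he
      have h1 : (∏ i ∈ S, (if e i = β i then (1 : ℝ) else 0))
          = ∏ i ∈ S, ((β i * e i) / 2 + 1 / 2) := by
        apply Finset.prod_congr rfl
        intro i hi
        rcases hβ i hi with hb | hb <;> rcases hD e he i with hei | hei <;>
          simp [hb, hei] <;> norm_num
      rw [h1, Finset.prod_add]
      apply Finset.sum_congr rfl
      intro T hT
      rw [Finset.mem_powerset] at hT
      have hcard : T.card + (S \ T).card = k := by
        rw [Finset.card_sdiff_of_subset hT, hS]
        have := Finset.card_le_card hT
        omega
      have hβe : (∏ i ∈ T, (β i * e i / 2))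
          = (∏ i ∈ T, β i) * (∏ i ∈ T, e i) * (1/2 : ℝ) ^ T.card := by
        rw [← Finset.prod_const, ← Finset.prod_mul_distrib, ← Finset.prod_mul_distrib]
        apply Finset.prod_congr rfl; intro i _; ring
      have h2 : ((1:ℝ)/2) ^ T.card * ((1:ℝ)/2) ^ (S \ T).card = (2:ℝ) ^ (-(k:ℤ)) := by
        rw [← pow_add, hcard, zpow_neg, zpow_natCast, one_div, inv_pow]
      rw [Finset.prod_const, hβe, hα]
      calc (∏ i ∈ T, β i) * (∏ i ∈ T, e i) * (1/2 : ℝ) ^ T.card * (1/2:ℝ) ^ (S \ T).card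
          = (((1:ℝ)/2) ^ T.card * ((1:ℝ)/2) ^ (S \ T).card) * ((∏ i ∈ T, β i) * ∏ i ∈ T, e i) := by ring
        _ = (2:ℝ) ^ (-(k:ℤ)) * (∏ i ∈ T, β i) * ∏ i ∈ T, e i := by rw [h2]; ring
    calc (D.map fun e => ∏ i ∈ S, (if e i = β i then (1 : ℝ) else 0)).sum
        = (D.map fun e => ∑ T ∈ S.powerset, α T * ∏ i ∈ T, e i).sum := by
          apply congrArg
          exact Multiset.map_congr rfl hpt
      _ = ∑ T ∈ S.powerset, (D.map fun e => α T * ∏ i ∈ T, e i).sum :=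
          multiset_sum_map_swap D S.powerset _
      _ = ∑ T ∈ S.powerset, α T * (D.map fun e => ∏ i ∈ T, e i).sum := by
          apply Finset.sum_congr rfl
          intro T _
          rw [Multiset.sum_map_mul_left]
  rw [key, ← Finset.sum_sub_distrib]
  have hdiff : ∀ T ∈ S.powerset,
      α T * yhat T - α T * (D.map fun e => ∏ i ∈ T, e i).sum
        = α T * (yhat T - (D.map fun e => ∏ i ∈ T, e i).sum) := by
    intro T _; ring
  have habsα : ∀ T ∈ S.powerset, |α T| = (2:ℝ) ^ (-(k:ℤ)) := by
    intro T hT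
    rw [Finset.mem_powerset] at hT
    have : |∏ i ∈ T, β i| = 1 := by
      rw [Finset.abs_prod]
      apply Finset.prod_eq_one
      intro i hi
      rcases hβ i (hT hi) with hb | hb <;> simp [hb]
    rw [hα, abs_mul, this, mul_one, abs_of_pos (by positivity)]
  calc |∑ T ∈ S.powerset,
        (α T * yhat T - α T * (D.map fun e => ∏ i ∈ T, e i).sum)|
      ≤ ∑ T ∈ S.powerset,
        |α T * yhat T - α T * (D.map fun e => ∏ i ∈ T, e i).sum| :=
        Finset.abs_sum_le_sum_abs _ _
    _ ≤ ∑ T ∈ S.powerset, (2:ℝ) ^ (-(k:ℤ)) * lam := by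
        apply Finset.sum_le_sum
        intro T hT
        rw [hdiff T hT, abs_mul, habsα T hT]
        apply mul_le_mul_of_nonneg_left _ (by positivity)
        apply hyhat
        rw [Finset.mem_powerset] at hT
        calc T.card ≤ S.card := Finset.card_le_card hT
          _ = k := hS
    _ = lam := by
        rw [Finset.sum_const, Finset.card_powerset, hS, nsmul_eq_mul]
        push_cast
        rw [← mul_assoc, ← zpow_natCast (2:ℝ) k, ← zpow_add₀ (by norm_num : (2:ℝ) ≠ 0)]
        simp
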